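/- arXiv:1803.04673 — 3 statements merged into one kernel-verified Lean document; each statement's English description precedes it below -/
import Mathlib

section
/- Assume U is nonempty and there exists x̄ ∈ X with p(x̄) ∈ ℝ (i.e., dom p ≠ ∅). The following statements are equivalent: (i) stable robust duality holds, i.e., p*(x*) = q(x*) for all x* ∈ X*; (ii) ∂^ε p(x) = C^ε(x) for all ε ≥ 0 and all x ∈ X; (iii) there exists ε̄ > 0 such that ∂^ε p(x) = C^ε(x) for all ε ∈ (0, ε̄) and all x ∈ X. -/
noncomputable section

namespace RobustDuality

/-- The set of `ε`-minimizers of an extended-real-valued function `h`: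
`{z | h z ∈ ℝ ∧ h z ≤ inf h + ε}` (empty when `inf h ∉ ℝ`). -/
def epsArgmin {Z : Type*} (h : Z → EReal) (ε : ℝ) : Set Z :=
  {z | (∃ r : ℝ, h z = (r : EReal)) ∧ h z ≤ (⨅ w, h w) + (ε : EReal)}

variable {X : Type*} [AddCommGroup X] [Module ℝ X] [TopologicalSpace X]
  [IsTopologicalAddGroup X] [ContinuousSMul ℝ X] [LocallyConvexSpace ℝ X] [T2Space X]

/-- `(M^ε h)(x*) := ε-argmin (h - x*)` for `h : X → EReal` and `x* ∈ X*`. -/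
def M1 (h : X → EReal) (ε : ℝ) (xs : X →L[ℝ] ℝ) : Set X :=
  epsArgmin (fun x => h x - ((xs x : ℝ) : EReal)) ε

/-- Fenchel conjugate of `h : X → EReal`. -/
def conj1 (h : X → EReal) (xs : X →L[ℝ] ℝ) : EReal :=
  ⨆ x : X, ((xs x : ℝ) : EReal) - h x

/-- `ε`-subdifferential of `h : X → EReal` at `a`. -/
def epsSubdiff1 (h : X → EReal) (ε : ℝ) (a : X) : Set (X →L[ℝ] ℝ) :=
  {xs | (∃ r : ℝ, h a = (r : EReal)) ∧
    ∀ x, h a + ((xs x - xs a - ε : ℝ) : EReal) ≤ h x}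

section Pair

variable {Yu : Type*} [AddCommGroup Yu] [Module ℝ Yu] [TopologicalSpace Yu]
  [IsTopologicalAddGroup Yu] [ContinuousSMul ℝ Yu] [LocallyConvexSpace ℝ Yu] [T2Space Yu]

/-- Fenchel conjugate of `F : X × Y → EReal` at `(x*, y*)`. -/
def conj2 (F : X × Yu → EReal) (xs : X →L[ℝ] ℝ) (ys : Yu →L[ℝ] ℝ) : EReal :=
  ⨆ z : X × Yu, ((xs z.1 + ys z.2 : ℝ) : EReal) - F z

/-- `(M^ε F)(x*, y*) := ε-argmin (F - (x*, y*))`. -/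
def M2 (F : X × Yu → EReal) (ε : ℝ) (xs : X →L[ℝ] ℝ) (ys : Yu →L[ℝ] ℝ) : Set (X × Yu) :=
  epsArgmin (fun z => F z - ((xs z.1 + ys z.2 : ℝ) : EReal)) ε

/-- `ε`-subdifferential of `F : X × Y → EReal` at `a`, as a set of dual pairs. -/
def epsSubdiff2 (F : X × Yu → EReal) (ε : ℝ) (a : X × Yu) :
    Set ((X →L[ℝ] ℝ) × (Yu →L[ℝ] ℝ)) :=
  {zs | (∃ r : ℝ, F a = (r : EReal)) ∧
    ∀ z, F a + ((zs.1 z.1 + zs.2 z.2 - zs.1 a.1 - zs.2 a.2 - ε : ℝ) : EReal) ≤ F z}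

end Pair

variable {U : Type*} {Y : U → Type*} [∀ u, AddCommGroup (Y u)] [∀ u, Module ℝ (Y u)]
  [∀ u, TopologicalSpace (Y u)] [∀ u, IsTopologicalAddGroup (Y u)]
  [∀ u, ContinuousSMul ℝ (Y u)] [∀ u, LocallyConvexSpace ℝ (Y u)] [∀ u, T2Space (Y u)]

/-- The robust objective `p := sup_{u ∈ U} F_u (·, 0_u)`. -/
def pRob (F : ∀ u, X × Y u → EReal) (x : X) : EReal := ⨆ u, F u (x, 0)

/-- `q := inf over u ∈ U and y* ∈ Y_u* of F_u*(·, y*)`. -/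
def qRob (F : ∀ u, X × Y u → EReal) (xs : X →L[ℝ] ℝ) : EReal :=
  ⨅ (u : U) (ys : Y u →L[ℝ] ℝ), conj2 (F u) xs ys

/-- `S^ε(x*) := {x : p x ∈ ℝ ∧ p x - ⟨x*, x⟩ ≤ -q x* + ε}`. -/
def Sset (F : ∀ u, X × Y u → EReal) (ε : ℝ) (xs : X →L[ℝ] ℝ) : Set X :=
  {x | (∃ r : ℝ, pRob F x = (r : EReal)) ∧
    pRob F x - ((xs x : ℝ) : EReal) ≤ -qRob F xs + (ε : EReal)}

/-- `J^ε(u) := {x : p x ∈ ℝ ∧ p x ≤ F_u(x, 0) + ε}`. -/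
def Jset (F : ∀ u, X × Y u → EReal) (ε : ℝ) (u : U) : Set X :=
  {x | (∃ r : ℝ, pRob F x = (r : EReal)) ∧ pRob F x ≤ F u (x, 0) + (ε : EReal)}

/-- `A^{(ε₁,ε₂)}_{(u,y*)}(x*) := {x ∈ J^{ε₁}(u) : (x, 0) ∈ (M^{ε₂}F_u)(x*, y*)}`. -/
def Aset (F : ∀ u, X × Y u → EReal) (ε₁ ε₂ : ℝ) (u : U) (ys : Y u →L[ℝ] ℝ)
    (xs : X →L[ℝ] ℝ) : Set X :=
  {x | x ∈ Jset F ε₁ u ∧ (x, (0 : Y u)) ∈ M2 (F u) ε₂ xs ys}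

/-- `𝒜^ε(x*)`. -/
def calA (F : ∀ u, X × Y u → EReal) (ε : ℝ) (xs : X →L[ℝ] ℝ) : Set X :=
  ⋂ (η : ℝ) (_ : 0 < η),
    ⋃ (u : U) (ys : Y u →L[ℝ] ℝ) (ε₁ : ℝ) (ε₂ : ℝ)
      (_ : 0 ≤ ε₁) (_ : 0 ≤ ε₂) (_ : ε₁ + ε₂ = ε + η), Aset F ε₁ ε₂ u ys xs

/-- `B^ε_{(u,y*)}(x*)`. -/
def Bset (F : ∀ u, X × Y u → EReal) (ε : ℝ) (u : U) (ys : Y u →L[ℝ] ℝ)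
    (xs : X →L[ℝ] ℝ) : Set X :=
  ⋃ (ε₁ : ℝ) (ε₂ : ℝ) (_ : 0 ≤ ε₁) (_ : 0 ≤ ε₂) (_ : ε₁ + ε₂ = ε),
    Aset F ε₁ ε₂ u ys xs

/-- `B^ε(x*) := ⋃_{u, y*} B^ε_{(u,y*)}(x*)`. -/
def BsetAll (F : ∀ u, X × Y u → EReal) (ε : ℝ) (xs : X →L[ℝ] ℝ) : Set X :=
  ⋃ (u : U) (ys : Y u →L[ℝ] ℝ), Bset F ε u ys xs

/-- `I^ε(x)`: the set of `ε`-active indices at `x`. -/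
def Iset (F : ∀ u, X × Y u → EReal) (ε : ℝ) (x : X) : Set U :=
  {u | (∃ r : ℝ, pRob F x = (r : EReal)) ∧ pRob F x - (ε : EReal) ≤ F u (x, 0)}

/-- `C^ε(x)`. -/
def Cset (F : ∀ u, X × Y u → EReal) (ε : ℝ) (x : X) : Set (X →L[ℝ] ℝ) :=
  ⋂ (η : ℝ) (_ : 0 < η),
    ⋃ (ε₁ : ℝ) (ε₂ : ℝ) (_ : 0 ≤ ε₁) (_ : 0 ≤ ε₂) (_ : ε₁ + ε₂ = ε + η)
      (u : U) (_ : u ∈ Iset F ε₁ x),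
      Prod.fst '' epsSubdiff2 (F u) ε₂ (x, (0 : Y u))

/-- `D^ε(x)`. -/
def Dset (F : ∀ u, X × Y u → EReal) (ε : ℝ) (x : X) : Set (X →L[ℝ] ℝ) :=
  ⋃ (ε₁ : ℝ) (ε₂ : ℝ) (_ : 0 ≤ ε₁) (_ : 0 ≤ ε₂) (_ : ε₁ + ε₂ = ε)
    (u : U) (_ : u ∈ Iset F ε₁ x),
    Prod.fst '' epsSubdiff2 (F u) ε₂ (x, (0 : Y u))

/-- The exact active index set `I(x) := {u : F_u(x,0) = p(x)}` (when `p(x) ∈ ℝ`). -/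
def I0set (F : ∀ u, X × Y u → EReal) (x : X) : Set U :=
  {u | (∃ r : ℝ, pRob F x = (r : EReal)) ∧ F u (x, 0) = pRob F x}

/-- `D(x) := ⋃_{u ∈ I(x)} proj_{X*} ∂F_u(x, 0)`. -/
def D0set (F : ∀ u, X × Y u → EReal) (x : X) : Set (X →L[ℝ] ℝ) :=
  ⋃ (u : U) (_ : u ∈ I0set F x), Prod.fst '' epsSubdiff2 (F u) 0 (x, (0 : Y u))

/-- `B_{(u,y*)}(x*) := {x ∈ J(u) : (x, 0) ∈ (M F_u)(x*, y*)}`. -/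
def B0set (F : ∀ u, X × Y u → EReal) (u : U) (ys : Y u →L[ℝ] ℝ)
    (xs : X →L[ℝ] ℝ) : Set X :=
  {x | (∃ r : ℝ, pRob F x = (r : EReal)) ∧ F u (x, 0) = pRob F x ∧
    (x, (0 : Y u)) ∈ M2 (F u) 0 xs ys}

/-! ### Auxiliary lemmas -/

lemma EReal_exists_real {a : EReal} (h1 : a ≠ ⊥) (h2 : a ≠ ⊤) : ∃ r : ℝ, a = (r : EReal) :=
  ⟨a.toReal, (EReal.coe_toReal h2 h1).symm⟩

lemma EReal_le_coe_of_forall {a : EReal} {r : ℝ}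
    (h : ∀ δ : ℝ, 0 < δ → a ≤ ((r + δ : ℝ) : EReal)) : a ≤ (r : EReal) := by
  induction a using EReal.rec with
  | bot => exact bot_le
  | coe s =>
      refine EReal.coe_le_coe_iff.mpr (le_of_forall_pos_le_add fun δ hδ => ?_)
      exact EReal.coe_le_coe_iff.mp (h δ hδ)
  | top => exact absurd (h 1 one_pos) (EReal.coe_lt_top _).not_ge

lemma coe_le_EReal_of_forall {b : EReal} {r : ℝ}
    (h : ∀ δ : ℝ, 0 < δ → ((r - δ : ℝ) : EReal) ≤ b) : (r : EReal) ≤ b := by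
  induction b using EReal.rec with
  | bot =>
      have := h 1 one_pos
      simp only [le_bot_iff] at this
      exact absurd this (EReal.coe_ne_bot _)
  | coe s =>
      refine EReal.coe_le_coe_iff.mpr (le_of_forall_pos_le_add fun δ hδ => ?_)
      have := EReal.coe_le_coe_iff.mp (h δ hδ)
      linarith
  | top => exact le_top

lemma pRob_ne_bot (F : ∀ u, X × Y u → EReal) (hU : Nonempty U)
    (hF : ∀ u z, F u z ≠ ⊥) (x : X) : pRob F x ≠ ⊥ := by
  obtain ⟨u⟩ := hU
  have h1 : F u (x, 0) ≤ pRob F x := le_iSup (fun u => F u (x, 0)) u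
  exact fun h => hF u (x, 0) (le_bot_iff.mp (h ▸ h1))

lemma weak_duality (F : ∀ u, X × Y u → EReal) (xs : X →L[ℝ] ℝ) :
    conj1 (pRob F) xs ≤ qRob F xs := by
  refine le_iInf fun u => le_iInf fun ys => iSup_le fun x => ?_
  have h1 : ((xs x : ℝ) : EReal) - pRob F x ≤ ((xs x + ys 0 : ℝ) : EReal) - F u (x, 0) := by
    rw [map_zero, add_zero]
    exact EReal.sub_le_sub le_rfl (le_iSup (fun u => F u (x, 0)) u)
  exact h1.trans (le_iSup (fun z : X × Y u => ((xs z.1 + ys z.2 : ℝ) : EReal) - F u z) (x, 0))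

lemma Cset_subset (F : ∀ u, X × Y u → EReal) (ε : ℝ) (x : X) :
    Cset F ε x ⊆ epsSubdiff1 (pRob F) ε x := by
  intro xs hxs
  have hmem : ∀ η : ℝ, 0 < η → ∃ ε₁ ε₂ : ℝ, 0 ≤ ε₁ ∧ 0 ≤ ε₂ ∧ ε₁ + ε₂ = ε + η ∧
      ∃ u, u ∈ Iset F ε₁ x ∧ xs ∈ Prod.fst '' epsSubdiff2 (F u) ε₂ (x, (0 : Y u)) := by
    intro η hη
    have h := Set.mem_iInter₂.mp hxs η hη
    simp only [Set.mem_iUnion] at h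
    obtain ⟨ε₁, ε₂, h1, h2, h3, u, hu, hx⟩ := h
    exact ⟨ε₁, ε₂, h1, h2, h3, u, hu, hx⟩
  obtain ⟨ε₁', ε₂', _, _, _, u', hu', _⟩ := hmem 1 one_pos
  obtain ⟨r, hr⟩ := hu'.1
  refine ⟨⟨r, hr⟩, fun w => ?_⟩
  rw [hr, ← EReal.coe_add]
  refine coe_le_EReal_of_forall fun η hη => ?_
  obtain ⟨ε₁, ε₂, hε₁, hε₂, hsum, u, hu, hxs'⟩ := hmem η hη
  obtain ⟨zs, hsub, hfst⟩ := hxs'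
  obtain ⟨s, hs⟩ := hsub.1
  have key := hsub.2 (w, (0 : Y u))
  rw [hs, ← EReal.coe_add] at key
  have hIneq : pRob F x - (ε₁ : EReal) ≤ F u (x, 0) := hu.2
  rw [hr, hs, ← EReal.coe_sub] at hIneq
  have hrs : r - ε₁ ≤ s := EReal.coe_le_coe_iff.mp hIneq
  have hle : F u (w, 0) ≤ pRob F w := le_iSup (fun u => F u (w, 0)) u
  refine le_trans ?_ (key.trans hle)
  refine EReal.coe_le_coe_iff.mpr ?_
  rw [hfst] at *
  simp only [map_zero]
  linarith

lemma subdiff_subset_Cset (F : ∀ u, X × Y u → EReal) (hU : Nonempty U)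
    (hF : ∀ u z, F u z ≠ ⊥)
    (hq : ∀ xs : X →L[ℝ] ℝ, conj1 (pRob F) xs = qRob F xs)
    (ε : ℝ) (x : X) :
    epsSubdiff1 (pRob F) ε x ⊆ Cset F ε x := by
  intro xs hxs
  obtain ⟨⟨r, hr⟩, hsub⟩ := hxs
  -- upper bound for the conjugate of p
  have hub : conj1 (pRob F) xs ≤ ((xs x - r + ε : ℝ) : EReal) := by
    refine iSup_le fun z => ?_
    have h := hsub z
    rw [hr, ← EReal.coe_add] at h
    rcases eq_or_ne (pRob F z) ⊤ with hz | hz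
    · rw [hz, EReal.sub_top]; exact bot_le
    · obtain ⟨s, hs⟩ := EReal_exists_real (pRob_ne_bot F hU hF z) hz
      rw [hs] at h ⊢
      rw [← EReal.coe_sub]
      refine EReal.coe_le_coe_iff.mpr ?_
      have := EReal.coe_le_coe_iff.mp h
      linarith
  have hlb : ((xs x - r : ℝ) : EReal) ≤ conj1 (pRob F) xs := by
    have h := le_iSup (fun z => ((xs z : ℝ) : EReal) - pRob F z) x
    rw [hr, ← EReal.coe_sub] at h
    exact h
  have hne_bot : conj1 (pRob F) xs ≠ ⊥ := fun hb => by
    rw [hb] at hlb; exact (EReal.coe_ne_bot _) (le_bot_iff.mp hlb)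
  have hne_top : conj1 (pRob F) xs ≠ ⊤ := fun htp => by
    rw [htp] at hub; exact (EReal.coe_lt_top _).not_ge hub
  obtain ⟨t, ht⟩ := EReal_exists_real hne_bot hne_top
  have htub : t ≤ xs x - r + ε := EReal.coe_le_coe_iff.mp (ht ▸ hub)
  refine Set.mem_iInter₂.mpr fun η hη => ?_
  -- find an almost-optimal (u, ys) for q
  have hqlt : qRob F xs < ((t + η / 2 : ℝ) : EReal) := by
    rw [← hq xs, ht]
    exact EReal.coe_lt_coe_iff.mpr (by linarith)
  rw [qRob, iInf_lt_iff] at hqlt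
  obtain ⟨u, hqlt⟩ := hqlt
  rw [iInf_lt_iff] at hqlt
  obtain ⟨ys, hconj⟩ := hqlt
  -- F u (x,0) is real
  have hFle : F u (x, 0) ≤ (r : EReal) := hr ▸ le_iSup (fun u => F u (x, 0)) u
  obtain ⟨s, hs⟩ := EReal_exists_real (hF u (x, 0))
    (fun h => by rw [h] at hFle; exact absurd hFle (EReal.coe_lt_top _).not_ge)
  have hsr : s ≤ r := EReal.coe_le_coe_iff.mp (hs ▸ hFle)
  -- lower bound relating s and t
  have hconj_lb : ((xs x - s : ℝ) : EReal) ≤ conj2 (F u) xs ys := by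
    have h := le_iSup (fun z : X × Y u => ((xs z.1 + ys z.2 : ℝ) : EReal) - F u z)
      ((x, 0) : X × Y u)
    rw [hs, ← EReal.coe_sub] at h
    simpa [map_zero, conj2] using h
  have hst : xs x - s < t + η / 2 :=
    EReal.coe_lt_coe_iff.mp (lt_of_le_of_lt hconj_lb hconj)
  -- choose ε₁, ε₂
  have key : ∀ z : X × Y u,
      F u (x, 0) + ((xs z.1 + ys z.2 - xs x - ys 0 - (ε + η - (r - s)) : ℝ) : EReal) ≤ F u z := by
    intro z
    rw [hs, ← EReal.coe_add]
    rcases eq_or_ne (F u z) ⊤ with hz | hz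
    · rw [hz]; exact le_top
    · obtain ⟨w, hw⟩ := EReal_exists_real (hF u z) hz
      have h := le_iSup (fun z : X × Y u => ((xs z.1 + ys z.2 : ℝ) : EReal) - F u z) z
      rw [hw, ← EReal.coe_sub] at h
      have h2 : xs z.1 + ys z.2 - w < t + η / 2 :=
        EReal.coe_lt_coe_iff.mp (lt_of_le_of_lt h hconj)
      rw [hw]
      refine EReal.coe_le_coe_iff.mpr ?_
      simp only [map_zero]
      linarith
  simp only [Set.mem_iUnion]
  refine ⟨r - s, ε + η - (r - s), by linarith, by linarith, by ring, u,
    ⟨⟨r, hr⟩, ?_⟩, (xs, ys), ⟨⟨s, hs⟩, key⟩, rfl⟩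
  rw [hr, hs, ← EReal.coe_sub]
  exact EReal.coe_le_coe_iff.mpr (by linarith)

/-- Theorem 6.1 (stable robust duality). -/
theorem stable_robust_duality_iff
    (F : ∀ u, X × Y u → EReal) (hU : Nonempty U) (hF : ∀ u z, F u z ≠ ⊥)
    (hdomp : ∃ xbar : X, ∃ r : ℝ, pRob F xbar = (r : EReal)) :
    List.TFAE
      [∀ xs : X →L[ℝ] ℝ, conj1 (pRob F) xs = qRob F xs,
       ∀ ε : ℝ, 0 ≤ ε → ∀ x : X, epsSubdiff1 (pRob F) ε x = Cset F ε x,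
       ∃ εbar : ℝ, 0 < εbar ∧ ∀ ε : ℝ, 0 < ε → ε < εbar → ∀ x : X,
         epsSubdiff1 (pRob F) ε x = Cset F ε x] := by
  tfae_have 1 → 2
  | h1, ε, _, x =>
    Set.Subset.antisymm (subdiff_subset_Cset F hU hF h1 ε x) (Cset_subset F ε x)
  tfae_have 2 → 3
  | h2 => ⟨1, one_pos, fun ε hε _ x => h2 ε hε.le x⟩
  tfae_have 3 → 1 := by
    rintro ⟨εbar, hεbar, h⟩ xs
    refine le_antisymm (weak_duality F xs) ?_
    obtain ⟨xbar, r0, hxbar⟩ := hdomp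
    have hlb : ((xs xbar - r0 : ℝ) : EReal) ≤ conj1 (pRob F) xs := by
      have h := le_iSup (fun z => ((xs z : ℝ) : EReal) - pRob F z) xbar
      rw [hxbar, ← EReal.coe_sub] at h
      exact h
    rcases eq_or_ne (conj1 (pRob F) xs) ⊤ with htop | htop
    · rw [htop]; exact le_top
    have hne_bot : conj1 (pRob F) xs ≠ ⊥ := fun hb => by
      rw [hb] at hlb; exact (EReal.coe_ne_bot _) (le_bot_iff.mp hlb)
    obtain ⟨c, hc⟩ := EReal_exists_real hne_bot htop
    have hc' : (⨆ z : X, ((xs z : ℝ) : EReal) - pRob F z) = (c : EReal) := hc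
    rw [hc]
    refine EReal_le_coe_of_forall fun δ hδ => ?_
    set ε : ℝ := min (εbar / 2) (δ / 2) with hεdef
    have hε0 : 0 < ε := lt_min (by linarith) (by linarith)
    have hεlt : ε < εbar := lt_of_le_of_lt (min_le_left _ _) (by linarith)
    have hεδ : ε ≤ δ / 2 := min_le_right _ _
    -- find an almost maximizing x
    have hx : ((c - ε / 2 : ℝ) : EReal) < conj1 (pRob F) xs := by
      rw [hc]; exact EReal.coe_lt_coe_iff.mpr (by linarith)
    rw [conj1, lt_iSup_iff] at hx
    obtain ⟨x, hx⟩ := hx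
    have hpx_ne_top : pRob F x ≠ ⊤ := by
      intro hp
      rw [hp, EReal.sub_top] at hx
      exact absurd hx (by simp)
    obtain ⟨r, hr⟩ := EReal_exists_real (pRob_ne_bot F hU hF x) hpx_ne_top
    rw [hr, ← EReal.coe_sub] at hx
    have hx' : c - ε / 2 < xs x - r := EReal.coe_lt_coe_iff.mp hx
    -- upper bound : xs x - r ≤ c
    have hxc : xs x - r ≤ c := by
      have h := le_iSup (fun z => ((xs z : ℝ) : EReal) - pRob F z) x
      rw [hr, ← EReal.coe_sub, hc'] at h
      exact EReal.coe_le_coe_iff.mp h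
    -- xs belongs to the ε-subdifferential of p at x
    have hmem : xs ∈ epsSubdiff1 (pRob F) ε x := by
      refine ⟨⟨r, hr⟩, fun z => ?_⟩
      rw [hr, ← EReal.coe_add]
      rcases eq_or_ne (pRob F z) ⊤ with hz | hz
      · rw [hz]; exact le_top
      obtain ⟨w, hw⟩ := EReal_exists_real (pRob_ne_bot F hU hF z) hz
      have h := le_iSup (fun z => ((xs z : ℝ) : EReal) - pRob F z) z
      rw [hw, ← EReal.coe_sub, hc'] at h
      have h2 : xs z - w ≤ c := EReal.coe_le_coe_iff.mp h
      rw [hw]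
      exact EReal.coe_le_coe_iff.mpr (by linarith)
    rw [h ε hε0 hεlt x] at hmem
    -- use η := ε / 2
    have h2 := Set.mem_iInter₂.mp hmem (ε / 2) (by linarith)
    simp only [Set.mem_iUnion] at h2
    obtain ⟨ε₁, ε₂, hε₁, hε₂, hsum, u, hu, zs, hzs, hfst⟩ := h2
    obtain ⟨s, hs⟩ := hzs.1
    have hs_lb : r - ε₁ ≤ s := by
      have h := hu.2
      rw [hr, hs, ← EReal.coe_sub] at h
      exact EReal.coe_le_coe_iff.mp h
    -- bound conj2
    have hconj_ub : conj2 (F u) xs zs.2 ≤ ((xs x - s + ε₂ : ℝ) : EReal) := by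
      refine iSup_le fun z => ?_
      rcases eq_or_ne (F u z) ⊤ with hz | hz
      · rw [hz, EReal.sub_top]; exact bot_le
      obtain ⟨w, hw⟩ := EReal_exists_real (hF u z) hz
      have hkey := hzs.2 z
      rw [hs, ← EReal.coe_add, hw] at hkey
      have h3 : s + (zs.1 z.1 + zs.2 z.2 - zs.1 x - zs.2 0 - ε₂) ≤ w :=
        EReal.coe_le_coe_iff.mp hkey
      rw [hw, ← EReal.coe_sub]
      refine EReal.coe_le_coe_iff.mpr ?_
      rw [hfst] at h3
      simp only [map_zero] at h3
      linarith
    have hq_le : qRob F xs ≤ conj2 (F u) xs zs.2 := by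
      exact le_trans (iInf_le _ u) (iInf_le _ zs.2)
    refine le_trans (hq_le.trans hconj_ub) (EReal.coe_le_coe_iff.mpr ?_)
    have : (3 : ℝ) / 2 * ε ≤ δ := by linarith
    linarith
  tfae_finish

end RobustDuality
end
end

section
/- For every x ∈ X one has D(x) ⊆ C(x) ⊆ ∂p(x), where ∂p(x) := ∂⁰p(x) is the (exact) subdifferential of p at x, D(x) := ⋃_{u∈I(x)} proj^u_{X*} ∂F_u(x, 0_u), C(x) := ⋂_{η>0} ⋃_{ε₁,ε₂≥0, ε₁+ε₂=η} ⋃_{u∈I^{ε₁}(x)} proj^u_{X*} ∂^{ε₂}F_u(x, 0_u), and I(x) := I⁰(x) = {u ∈ U : F_u(x, 0_u) = p(x)} when p(x) ∈ ℝ (∅ otherwise). -/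
noncomputable section

namespace RobustDuality

variable {X : Type*} [AddCommGroup X] [Module ℝ X] [TopologicalSpace X]
  [IsTopologicalAddGroup X] [ContinuousSMul ℝ X] [LocallyConvexSpace ℝ X] [T2Space X]

variable {U : Type*} {Y : U → Type*} [∀ u, AddCommGroup (Y u)] [∀ u, Module ℝ (Y u)]
  [∀ u, TopologicalSpace (Y u)] [∀ u, IsTopologicalAddGroup (Y u)]
  [∀ u, ContinuousSMul ℝ (Y u)] [∀ u, LocallyConvexSpace ℝ (Y u)] [∀ u, T2Space (Y u)]

/-- Lemma 8.1: `D(x) ⊆ C(x) ⊆ ∂p(x)`. -/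
theorem D0set_subset_Cset_subset_subdiff
    (F : ∀ u, X × Y u → EReal) (hU : Nonempty U) (hF : ∀ u z, F u z ≠ ⊥) (x : X) :
    D0set F x ⊆ Cset F 0 x ∧ Cset F 0 x ⊆ epsSubdiff1 (pRob F) 0 x := by
  constructor
  · -- D(x) ⊆ C(x)
    intro xs hxs
    simp only [D0set, Set.mem_iUnion] at hxs
    obtain ⟨u, hu, hmem⟩ := hxs
    obtain ⟨⟨r, hr⟩, hFu⟩ := hu
    simp only [Cset, Set.mem_iInter, Set.mem_iUnion]
    intro η hη
    refine ⟨η, 0, le_of_lt hη, le_rfl, by ring, u, ⟨⟨r, hr⟩, ?_⟩, hmem⟩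
    rw [hFu, hr]
    calc ((r : EReal) - (η : EReal)) = ((r - η : ℝ) : EReal) := by
          rw [EReal.coe_sub]
      _ ≤ (r : EReal) := by
          exact_mod_cast sub_le_self r (le_of_lt hη)
  · -- C(x) ⊆ ∂p(x)
    intro xs hxs
    simp only [Cset, Set.mem_iInter, Set.mem_iUnion] at hxs
    obtain ⟨ε₁, ε₂, _, _, _, u, ⟨⟨r, hr⟩, _⟩, _⟩ := hxs 1 one_pos
    refine ⟨⟨r, hr⟩, ?_⟩
    intro w
    have key : ∀ η : ℝ, 0 < η →
        ((r + (xs w - xs x) - η : ℝ) : EReal) ≤ pRob F w := by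
      intro η hη
      obtain ⟨ε₁, ε₂, hε₁, hε₂, hsum, u, ⟨⟨r', hr'⟩, hact⟩, ⟨xs', ys'⟩, hsub, hproj⟩ :=
        hxs η hη
      have hr'r : r' = r := by
        have : (r' : EReal) = (r : EReal) := hr'.symm.trans hr
        exact_mod_cast this
      subst hr'r
      obtain ⟨⟨s, hs⟩, hineq⟩ := hsub
      have hact' : r' - ε₁ ≤ s := by
        rw [hr', hs] at hact
        have : ((r' - ε₁ : ℝ) : EReal) ≤ ((s : ℝ) : EReal) := by
          rw [EReal.coe_sub]; exact hact
        exact_mod_cast this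
      have h1 := hineq (w, (0 : Y u))
      simp only [hs] at h1
      have hxs'xs : xs' = xs := hproj
      have h2 : ((s + (xs w - xs x) - ε₂ : ℝ) : EReal) ≤ F u (w, 0) := by
        have heq : ((s : ℝ) : EReal) + ((xs' w + ys' 0 - xs' x - ys' 0 - ε₂ : ℝ) : EReal)
            = ((s + (xs w - xs x) - ε₂ : ℝ) : EReal) := by
          rw [← EReal.coe_add, hxs'xs]; ring_nf
        rw [← heq]; exact h1
      have h3 : F u (w, 0) ≤ pRob F w := le_iSup (fun v => F v (w, 0)) u
      refine le_trans ?_ (le_trans h2 h3)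
      exact EReal.coe_le_coe_iff.mpr (by linarith)
    rw [hr]
    have goal_eq : ((r : ℝ) : EReal) + ((xs w - xs x - 0 : ℝ) : EReal)
        = ((r + (xs w - xs x) : ℝ) : EReal) := by
      rw [← EReal.coe_add]; ring_nf
    rw [goal_eq]
    rw [← EReal.ge_of_forall_gt_iff_ge]
    intro z hz
    have hz' : z < r + (xs w - xs x) := by exact_mod_cast hz
    have := key (r + (xs w - xs x) - z) (by linarith)
    have heq : r + (xs w - xs x) - (r + (xs w - xs x) - z) = z := by ring
    rwa [heq] at this

end RobustDuality
end
end

section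
/- Let x ∈ X with p(x) ∈ ℝ. The following statements are equivalent: (i) the Basic Robust Subdifferential Condition holds at x, i.e., ∂p(x) = D(x) := ⋃_{u∈I(x)} proj^u_{X*} ∂F_u(x, 0_u), where I(x) := {u ∈ U : F_u(x, 0_u) = p(x)}; (ii) min-max robust duality holds at every x* ∈ ∂p(x), i.e., for every x* ∈ ∂p(x) there exist u ∈ U and y_u* ∈ Y_u* such that the infimum of p − x* over X is attained and p*(x*) = F_u*(x*, y_u*) = q(x*); (iii) strong robust duality holds at every x* ∈ ∂p(x), i.e., for every x* ∈ ∂p(x) there exist u ∈ U and y_u* ∈ Y_u* with p*(x*) = F_u*(x*, y_u*) = q(x*). -/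
noncomputable section

namespace RobustDuality

variable {X : Type*} [AddCommGroup X] [Module ℝ X] [TopologicalSpace X]
  [IsTopologicalAddGroup X] [ContinuousSMul ℝ X] [LocallyConvexSpace ℝ X] [T2Space X]

variable {U : Type*} {Y : U → Type*} [∀ u, AddCommGroup (Y u)] [∀ u, Module ℝ (Y u)]
  [∀ u, TopologicalSpace (Y u)] [∀ u, IsTopologicalAddGroup (Y u)]
  [∀ u, ContinuousSMul ℝ (Y u)] [∀ u, LocallyConvexSpace ℝ (Y u)] [∀ u, T2Space (Y u)]

private lemma aux1 (a b : ℝ) (c : EReal) (h : (a:EReal) ≤ c) :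
    (b:EReal) - c ≤ ((b - a : ℝ):EReal) := by
  induction c using EReal.rec with
  | bot => exact absurd h (by simp)
  | coe c => norm_cast at h ⊢; linarith
  | top => simp [sub_eq_add_neg]

private lemma aux2 (a b : ℝ) (c : EReal) (h : ((a + b:ℝ):EReal) ≤ c) :
    (a:EReal) ≤ c - (b:ℝ) := by
  induction c using EReal.rec with
  | bot => exact absurd h (by simp)
  | coe c => norm_cast at h ⊢; linarith
  | top => simp [sub_eq_add_neg]

private lemma aux3 (b d : ℝ) (c : EReal) (hc : c ≠ ⊥) (h : (b:EReal) - c ≤ (d:ℝ)) :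
    ((b - d : ℝ):EReal) ≤ c := by
  induction c using EReal.rec with
  | bot => exact absurd rfl hc
  | coe c => norm_cast at h ⊢; linarith
  | top => simp

private lemma aux4 (c d : EReal) (h : c ≤ d) (b : EReal) : b - d ≤ b - c :=
  add_le_add_right (EReal.neg_le_neg_iff.mpr h) b

/-- Theorem 8.2 (Basic Robust Subdifferential Condition). -/
theorem BRSC_iff
    (F : ∀ u, X × Y u → EReal) (hU : Nonempty U) (hF : ∀ u z, F u z ≠ ⊥)
    (x : X) (hx : ∃ r : ℝ, pRob F x = (r : EReal)) :
    List.TFAE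
      [epsSubdiff1 (pRob F) 0 x = D0set F x,
       ∀ xs ∈ epsSubdiff1 (pRob F) 0 x, ∃ (u : U) (ys : Y u →L[ℝ] ℝ),
         (∃ xbar : X, pRob F xbar - ((xs xbar : ℝ) : EReal) =
            ⨅ z : X, (pRob F z - ((xs z : ℝ) : EReal))) ∧
         conj1 (pRob F) xs = conj2 (F u) xs ys ∧ conj2 (F u) xs ys = qRob F xs,
       ∀ xs ∈ epsSubdiff1 (pRob F) 0 x, ∃ (u : U) (ys : Y u →L[ℝ] ℝ),
         conj1 (pRob F) xs = conj2 (F u) xs ys ∧ conj2 (F u) xs ys = qRob F xs] := by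
  classical
  obtain ⟨r, hr⟩ := hx
  -- basic subgradient inequality in a convenient form
  have hpz_ge : ∀ (xs : X →L[ℝ] ℝ), xs ∈ epsSubdiff1 (pRob F) 0 x →
      ∀ z, ((r + (xs z - xs x) : ℝ) : EReal) ≤ pRob F z := by
    intro xs hxs z
    have h := hxs.2 z
    rw [hr, ← EReal.coe_add] at h
    convert h using 2
    ring
  -- conjugate of p at a subgradient
  have conj1_eq : ∀ (xs : X →L[ℝ] ℝ), xs ∈ epsSubdiff1 (pRob F) 0 x →
      conj1 (pRob F) xs = ((xs x - r : ℝ) : EReal) := by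
    intro xs hxs
    apply le_antisymm
    · apply iSup_le
      intro z
      have h := aux1 (r + (xs z - xs x)) (xs z) _ (hpz_ge xs hxs z)
      have e : (xs z - (r + (xs z - xs x)) : ℝ) = xs x - r := by ring
      rwa [e] at h
    · have h := le_iSup (fun z => ((xs z : ℝ) : EReal) - pRob F z) x
      rw [hr] at h
      simp only [← EReal.coe_sub] at h; exact h
  -- weak duality
  have weak : ∀ (xs : X →L[ℝ] ℝ) (u : U) (ys : Y u →L[ℝ] ℝ),
      conj1 (pRob F) xs ≤ conj2 (F u) xs ys := by
    intro xs u ys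
    apply iSup_le
    intro z
    have h1 : F u (z, 0) ≤ pRob F z := le_iSup (fun v => F v (z, 0)) u
    calc ((xs z : ℝ) : EReal) - pRob F z ≤ ((xs z : ℝ) : EReal) - F u (z, 0) :=
          aux4 _ _ h1 _
      _ = ((xs z + ys 0 : ℝ) : EReal) - F u (z, 0) := by simp
      _ ≤ conj2 (F u) xs ys :=
          le_iSup (fun w : X × Y u => ((xs w.1 + ys w.2 : ℝ) : EReal) - F u w) (z, 0)
  have weakq : ∀ (xs : X →L[ℝ] ℝ), conj1 (pRob F) xs ≤ qRob F xs := by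
    intro xs
    exact le_iInf fun u => le_iInf fun ys => weak xs u ys
  have qle : ∀ (xs : X →L[ℝ] ℝ) (u : U) (ys : Y u →L[ℝ] ℝ),
      qRob F xs ≤ conj2 (F u) xs ys := by
    intro xs u ys
    exact iInf_le_of_le u (iInf_le _ ys)
  tfae_have 1 → 3
  · intro h1 xs hxs
    have hxs' := hxs
    rw [h1] at hxs'
    simp only [D0set, Set.mem_iUnion] at hxs'
    obtain ⟨u, hI, zs, hmem, hfst⟩ := hxs'
    obtain ⟨xs', ys⟩ := zs
    simp only at hfst
    subst hfst
    have hux : F u (x, 0) = (r : EReal) := by rw [hI.2, hr]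
    have key : conj2 (F u) xs' ys ≤ ((xs' x - r : ℝ) : EReal) := by
      apply iSup_le
      intro z
      have h := hmem.2 z
      rw [hux, ← EReal.coe_add] at h
      have h' : ((r + (xs' z.1 + ys z.2 - xs' x) : ℝ) : EReal) ≤ F u z := by
        convert h using 2
        simp
      have h2 := aux1 (r + (xs' z.1 + ys z.2 - xs' x)) (xs' z.1 + ys z.2) _ h'
      have e : (xs' z.1 + ys z.2 - (r + (xs' z.1 + ys z.2 - xs' x)) : ℝ) = xs' x - r := by
        ring
      rwa [e] at h2
    have hc1 := conj1_eq xs' hxs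
    have e1 : conj1 (pRob F) xs' = conj2 (F u) xs' ys :=
      le_antisymm (weak xs' u ys) (by rw [hc1]; exact key)
    refine ⟨u, ys, e1, le_antisymm ?_ (qle xs' u ys)⟩
    rw [← e1]; exact weakq xs'
  tfae_have 3 → 2
  · intro h3 xs hxs
    obtain ⟨u, ys, e1, e2⟩ := h3 xs hxs
    refine ⟨u, ys, ⟨x, ?_⟩, e1, e2⟩
    apply le_antisymm
    · apply le_iInf
      intro z
      rw [hr, ← EReal.coe_sub]
      apply aux2
      have h := hpz_ge xs hxs z
      convert h using 2
      ring
    · exact iInf_le _ x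
  tfae_have 2 → 3
  · intro h2 xs hxs
    obtain ⟨u, ys, _, e1, e2⟩ := h2 xs hxs
    exact ⟨u, ys, e1, e2⟩
  tfae_have 3 → 1
  · intro h3
    ext xs
    constructor
    · intro hxs
      obtain ⟨u, ys, e1, _⟩ := h3 xs hxs
      have hc2 : conj2 (F u) xs ys = ((xs x - r : ℝ) : EReal) := by
        rw [← e1, conj1_eq xs hxs]
      have hz : ∀ z : X × Y u,
          ((xs z.1 + ys z.2 : ℝ) : EReal) - F u z ≤ ((xs x - r : ℝ) : EReal) := by
        intro z
        rw [← hc2]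
        exact le_iSup (fun w : X × Y u => ((xs w.1 + ys w.2 : ℝ) : EReal) - F u w) z
      -- F u (x,0) is real and equals r
      have hle : F u (x, 0) ≤ (r : EReal) := by
        rw [← hr]; exact le_iSup (fun v => F v (x, 0)) u
      have hne : F u (x, 0) ≠ ⊤ := fun h => by simp [h] at hle
      obtain ⟨s, hs⟩ : ∃ s : ℝ, F u (x, 0) = (s : EReal) := by
        lift F u (x, 0) to ℝ using ⟨hne, hF u (x, 0)⟩ with s
        exact ⟨s, rfl⟩
      have hsr : s = r := by
        have h := hz (x, 0)
        rw [hs] at h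
        have h' : ((xs x + ys 0 - s : ℝ) : EReal) ≤ ((xs x - r : ℝ) : EReal) := by
          rw [EReal.coe_sub]; exact_mod_cast h
        have hsle : s ≤ r := hs.symm.trans_le hle |> fun h'' => by
          exact_mod_cast h''
        have : (xs x + ys 0 - s : ℝ) ≤ xs x - r := by exact_mod_cast h'
        have hy0 : ys 0 = 0 := map_zero ys
        linarith
      subst hsr
      have huI : u ∈ I0set F x := ⟨⟨s, hr⟩, by rw [hs, hr]⟩
      have hmem : (xs, ys) ∈ epsSubdiff2 (F u) 0 (x, (0 : Y u)) := by
        refine ⟨⟨s, hs⟩, fun z => ?_⟩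
        have h := aux3 (xs z.1 + ys z.2) (xs x - s) (F u z) (hF u z) (hz z)
        rw [hs, ← EReal.coe_add]
        convert h using 2
        simp
        ring
      simp only [D0set, Set.mem_iUnion]
      exact ⟨u, huI, (xs, ys), hmem, rfl⟩
    · intro hxs
      simp only [D0set, Set.mem_iUnion] at hxs
      obtain ⟨u, hI, zs, hmem, hfst⟩ := hxs
      obtain ⟨xs', ys⟩ := zs
      simp only at hfst
      subst hfst
      refine ⟨⟨r, hr⟩, fun z => ?_⟩
      have h := hmem.2 (z, 0)
      have h' : pRob F x + ((xs' z - xs' x - 0 : ℝ) : EReal) ≤ F u (z, 0) := by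
        rw [← hI.2]
        convert h using 3
        simp
      exact h'.trans (le_iSup (fun v => F v (z, 0)) u)
  tfae_finish


end RobustDuality
end
end
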